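/- Let X, r be as in the context, let W : X → [0,∞) be measurable, let ν be a Borel measure on X satisfying ∫_X R_W f dν = ∫_X f dν for all bounded measurable f (i.e. ν is a left-eigenfunction of the transfer operator, ν R_W = ν), and let h : X → [0,∞) be measurable with R_W h = h pointwise. Then the measure μ with dμ = h dν (μ(E) = ∫_E h dν) is invariant: the pushforward of μ under r equals μ. -/

import Mathlib

open MeasureTheory

/-- The transfer operator `(R_W f)(x) = Σ_{y : r(y) = x} W(y) f(y)` associated with a
finite-to-one map `r` and a weight `W`, acting on complex-valued functions. -/
noncomputable def transferOpC {X : Type} (r : X → X) (W : X → ℝ) (f : X → ℂ) : X → ℂ :=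
  fun x => ∑' y : r ⁻¹' {x}, (W y : ℂ) * f y

/-- The transfer operator acting on real-valued functions. -/
noncomputable def transferOp {X : Type} (r : X → X) (W : X → ℝ) (f : X → ℝ) : X → ℝ :=
  fun x => ∑' y : r ⁻¹' {x}, W y * f y

lemma transferOp_eq_sum {X : Type} (r : X → X) (W : X → ℝ) {x : X} (hx : (r ⁻¹' {x}).Finite)
    (g : X → ℝ) : transferOp r W g x = ∑ y ∈ hx.toFinset, W y * g y := by
  rw [transferOp, ← Finset.tsum_subtype' hx.toFinset (fun y => W y * g y)]
  exact tsum_congr_set_coe (fun y => W y * g y) hx.coe_toFinset.symm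

lemma transferOpC_eq_sum {X : Type} (r : X → X) (W : X → ℝ) {x : X} (hx : (r ⁻¹' {x}).Finite)
    (g : X → ℂ) : transferOpC r W g x = ∑ y ∈ hx.toFinset, (W y : ℂ) * g y := by
  rw [transferOpC, ← Finset.tsum_subtype' hx.toFinset (fun y => (W y : ℂ) * g y)]
  exact tsum_congr_set_coe (fun y => (W y : ℂ) * g y) hx.coe_toFinset.symm

lemma eigen_smin (a : ℝ) : ⨆ m : ℕ, ENNReal.ofReal (min a m) = ENNReal.ofReal a := by
  apply le_antisymm
  · exact iSup_le fun m => ENNReal.ofReal_le_ofReal (min_le_left _ _)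
  · refine le_iSup_of_le ⌈a⌉₊ ?_
    rw [min_eq_left (Nat.le_ceil a)]

/-- **Eigen-measure times eigenfunction gives an invariant measure.**
Let `X` be a compact metric space with its Borel σ-algebra, `r : X → X` a measurable
surjection with finite nonempty fibers, and `W : X → [0,∞)` measurable.  Let `ν` be a
finite Borel measure with `∫ R_W f dν = ∫ f dν` for all bounded measurable `f`
(i.e. `ν R_W = ν`), and let `h : X → [0,∞)` be measurable with `R_W h = h` pointwise.
Then the measure `dμ = h dν` is invariant: its pushforward under `r` is itself. -/
theorem eigenmeasure_withDensity_invariant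
    {X : Type} [MetricSpace X] [CompactSpace X] [MeasurableSpace X] [BorelSpace X]
    (r : X → X) (hr_meas : Measurable r) (hr_surj : Function.Surjective r)
    (hfib : ∀ x : X, (r ⁻¹' {x}).Finite ∧ (r ⁻¹' {x}).Nonempty)
    (W : X → ℝ) (hW_meas : Measurable W) (hW_nonneg : ∀ x, 0 ≤ W x)
    (ν : Measure X) [IsFiniteMeasure ν]
    (hν : ∀ f : X → ℂ, Measurable f → (∃ C, ∀ x, ‖f x‖ ≤ C) →
      ∫ x, transferOpC r W f x ∂ν = ∫ x, f x ∂ν)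
    (h : X → ℝ) (hh_meas : Measurable h) (hh_nonneg : ∀ x, 0 ≤ h x)
    (hh_eig : ∀ x, transferOp r W h x = h x) :
    Measure.map r (ν.withDensity fun x => ENNReal.ofReal (h x))
      = ν.withDensity fun x => ENNReal.ofReal (h x) := by
  classical
  by_cases hν0 : ν = 0
  · subst hν0
    ext E hE
    simp [Measure.map_apply hr_meas hE]
  have hfin : ∀ x, (r ⁻¹' {x}).Finite := fun x => (hfib x).1
  -- positivity of the total mass
  have hν_pos : 0 < (ν Set.univ).toReal :=
    ENNReal.toReal_pos (Measure.measure_univ_ne_zero.mpr hν0) (measure_ne_top ν _)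
  -- pointwise facts about the transfer operator
  have Tnonneg : ∀ (g : X → ℝ), (∀ y, 0 ≤ g y) → ∀ x, 0 ≤ transferOp r W g x := by
    intro g hg x
    rw [transferOp_eq_sum r W (hfin x)]
    exact Finset.sum_nonneg fun y _ => mul_nonneg (hW_nonneg y) (hg y)
  have Tadd : ∀ (g₁ g₂ : X → ℝ) (x : X),
      transferOp r W (fun y => g₁ y + g₂ y) x = transferOp r W g₁ x + transferOp r W g₂ x := by
    intro g₁ g₂ x
    simp only [transferOp_eq_sum r W (hfin x), mul_add, Finset.sum_add_distrib]
  have Tmono : ∀ (g₁ g₂ : X → ℝ), (∀ y, g₁ y ≤ g₂ y) → ∀ x,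
      transferOp r W g₁ x ≤ transferOp r W g₂ x := by
    intro g₁ g₂ hg x
    rw [transferOp_eq_sum r W (hfin x), transferOp_eq_sum r W (hfin x)]
    exact Finset.sum_le_sum fun y _ => mul_le_mul_of_nonneg_left (hg y) (hW_nonneg y)
  have Tind : ∀ (E : Set X) (g : X → ℝ) (x : X),
      transferOp r W ((r ⁻¹' E).indicator g) x = E.indicator (transferOp r W g) x := by
    intro E g x
    by_cases hx : x ∈ E
    · rw [Set.indicator_of_mem hx, transferOp_eq_sum r W (hfin x),
        transferOp_eq_sum r W (hfin x)]
      refine Finset.sum_congr rfl fun y hy => ?_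
      have hry : r y = x := by simpa using (hfin x).mem_toFinset.mp hy
      rw [Set.indicator_of_mem (by simp [Set.mem_preimage, hry, hx])]
    · rw [Set.indicator_of_notMem hx, transferOp_eq_sum r W (hfin x)]
      refine Finset.sum_eq_zero fun y hy => ?_
      have hry : r y = x := by simpa using (hfin x).mem_toFinset.mp hy
      rw [Set.indicator_of_notMem (by simp [Set.mem_preimage, hry, hx]), mul_zero]
  -- the supremum identity coming from the eigen-equation
  have Tsup : ∀ x : X, (⨆ m : ℕ, ENNReal.ofReal (transferOp r W (fun y => min (h y) m) x))
      = ENNReal.ofReal (h x) := by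
    intro x
    have key : ∀ m : ℕ, ENNReal.ofReal (transferOp r W (fun y => min (h y) m) x)
        = ∑ y ∈ (hfin x).toFinset, ENNReal.ofReal (W y) * ENNReal.ofReal (min (h y) m) := by
      intro m
      rw [transferOp_eq_sum r W (hfin x),
        ENNReal.ofReal_sum_of_nonneg
          (fun y _ => mul_nonneg (hW_nonneg y) (le_min (hh_nonneg y) (Nat.cast_nonneg m)))]
      exact Finset.sum_congr rfl fun y _ => ENNReal.ofReal_mul (hW_nonneg y)
    simp only [key]
    have hmono : ∀ y : X, Monotone fun m : ℕ =>
        ENNReal.ofReal (W y) * ENNReal.ofReal (min (h y) m) := by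
      intro y m k hmk
      exact mul_le_mul_right (ENNReal.ofReal_le_ofReal
        (min_le_min le_rfl (Nat.cast_le.mpr hmk))) _
    rw [← ENNReal.finsetSum_iSup_of_monotone hmono]
    have hterm : ∀ y : X, (⨆ m : ℕ, ENNReal.ofReal (W y) * ENNReal.ofReal (min (h y) m))
        = ENNReal.ofReal (W y * h y) := by
      intro y
      rw [← ENNReal.mul_iSup, eigen_smin (h y), ENNReal.ofReal_mul (hW_nonneg y)]
    calc (∑ y ∈ (hfin x).toFinset, ⨆ m : ℕ,
          ENNReal.ofReal (W y) * ENNReal.ofReal (min (h y) m))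
        = ∑ y ∈ (hfin x).toFinset, ENNReal.ofReal (W y * h y) :=
          Finset.sum_congr rfl fun y _ => hterm y
      _ = ENNReal.ofReal (∑ y ∈ (hfin x).toFinset, W y * h y) :=
          (ENNReal.ofReal_sum_of_nonneg
            (fun y _ => mul_nonneg (hW_nonneg y) (hh_nonneg y))).symm
      _ = ENNReal.ofReal (h x) := by rw [← transferOp_eq_sum r W (hfin x), hh_eig x]
  -- integrability of bounded measurable functions
  have hint_of_bdd : ∀ g : X → ℝ, Measurable g → (∃ C, ∀ x, |g x| ≤ C) → Integrable g ν := by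
    rintro g hg ⟨C, hC⟩
    exact (integrable_const C).mono' hg.aestronglyMeasurable
      (Filter.Eventually.of_forall fun x => by simpa [Real.norm_eq_abs] using hC x)
  -- real Bochner eigen-equation from the complex hypothesis
  have K0 : ∀ g : X → ℝ, Measurable g → (∃ C, ∀ x, |g x| ≤ C) →
      ∫ x, transferOp r W g x ∂ν = ∫ x, g x ∂ν := by
    rintro g hg ⟨C, hC⟩
    have h1 := hν (fun y => (g y : ℂ)) (Complex.measurable_ofReal.comp hg)
      ⟨C, fun x => by simpa using hC x⟩
    have h2 : ∀ x, transferOpC r W (fun y => (g y : ℂ)) x = ((transferOp r W g x : ℝ) : ℂ) := by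
      intro x
      rw [transferOpC_eq_sum r W (hfin x), transferOp_eq_sum r W (hfin x)]
      push_cast
      rfl
    simp only [h2] at h1
    have e1 : ∫ x, ((transferOp r W g x : ℝ) : ℂ) ∂ν = ((∫ x, transferOp r W g x ∂ν : ℝ) : ℂ) :=
      integral_ofReal
    have e2 : ∫ x, ((g x : ℝ) : ℂ) ∂ν = ((∫ x, g x ∂ν : ℝ) : ℂ) := integral_ofReal
    rw [e1, e2] at h1
    exact_mod_cast h1
  -- main lemma: lintegral form of the eigen-equation, for bounded nonneg measurable g
  have K : ∀ g : X → ℝ, Measurable g → (∀ x, 0 ≤ g x) → (∃ C, ∀ x, |g x| ≤ C) →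
      Integrable (transferOp r W g) ν ∧
      ∫⁻ x, ENNReal.ofReal (transferOp r W g x) ∂ν = ∫⁻ x, ENNReal.ofReal (g x) ∂ν := by
    rintro g hg hg0 ⟨C, hC⟩
    have hgint : Integrable g ν := hint_of_bdd g hg ⟨C, hC⟩
    have hQeq : ∫ x, transferOp r W (fun _ => (1:ℝ)) x ∂ν = (ν Set.univ).toReal := by
      rw [K0 _ measurable_const ⟨1, fun x => by norm_num⟩]
      simp [measureReal_def]
    have hQint : Integrable (transferOp r W (fun _ => (1:ℝ))) ν := by
      by_contra hcon
      rw [integral_undef hcon] at hQeq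
      exact hν_pos.ne' hQeq.symm
    have hg1eq : ∫ x, transferOp r W (fun y => g y + 1) x ∂ν
        = ∫ x, g x ∂ν + (ν Set.univ).toReal := by
      rw [K0 (fun y => g y + 1) (hg.add measurable_const)
        ⟨C + 1, fun x => (abs_add_le (g x) 1).trans (by simpa using add_le_add_right (hC x) 1)⟩,
        integral_add hgint (integrable_const 1)]
      simp [measureReal_def]
    have hpos : 0 < ∫ x, g x ∂ν + (ν Set.univ).toReal :=
      add_pos_of_nonneg_of_pos (integral_nonneg hg0) hν_pos
    have hg1int : Integrable (transferOp r W (fun y => g y + 1)) ν := by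
      by_contra hcon
      rw [integral_undef hcon] at hg1eq
      exact hpos.ne' hg1eq.symm
    have hTgint : Integrable (transferOp r W g) ν := by
      have hdiff : (fun x => transferOp r W (fun y => g y + 1) x
          - transferOp r W (fun _ => (1:ℝ)) x) = transferOp r W g := by
        funext x
        rw [Tadd g (fun _ => (1:ℝ)) x]
        ring
      exact hdiff ▸ (hg1int.sub hQint)
    refine ⟨hTgint, ?_⟩
    rw [← ofReal_integral_eq_lintegral_ofReal hTgint
        (Filter.Eventually.of_forall (Tnonneg g hg0)),
      ← ofReal_integral_eq_lintegral_ofReal hgint (Filter.Eventually.of_forall hg0),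
      K0 g hg ⟨C, hC⟩]
  -- now the main argument
  ext E hE
  rw [Measure.map_apply hr_meas hE, withDensity_apply _ (hr_meas hE), withDensity_apply _ hE,
    ← lintegral_indicator (hr_meas hE), ← lintegral_indicator hE]
  set g : ℕ → X → ℝ := fun m => (r ⁻¹' E).indicator (fun y => min (h y) m) with hg_def
  have hmeas_gm : ∀ m : ℕ, Measurable (g m) :=
    fun m => (hh_meas.min measurable_const).indicator (hr_meas hE)
  have hnn_gm : ∀ (m : ℕ) (x : X), 0 ≤ g m x := fun m x =>
    Set.indicator_nonneg (fun y _ => le_min (hh_nonneg y) (Nat.cast_nonneg m)) x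
  have hbd_gm : ∀ m : ℕ, ∀ x, |g m x| ≤ (m : ℝ) := by
    intro m x
    by_cases hx : x ∈ r ⁻¹' E
    · rw [hg_def]
      simp only [Set.indicator_of_mem hx]
      rw [abs_of_nonneg (le_min (hh_nonneg x) (Nat.cast_nonneg m))]
      exact min_le_right _ _
    · rw [hg_def]
      simp [Set.indicator_of_notMem hx]
  have hK : ∀ m : ℕ, Integrable (transferOp r W (g m)) ν ∧
      ∫⁻ x, ENNReal.ofReal (transferOp r W (g m) x) ∂ν
        = ∫⁻ x, ENNReal.ofReal (g m x) ∂ν :=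
    fun m => K (g m) (hmeas_gm m) (hnn_gm m) ⟨m, hbd_gm m⟩
  -- left-hand side via monotone convergence
  have hL : ∫⁻ x, Set.indicator (r ⁻¹' E) (fun y => ENNReal.ofReal (h y)) x ∂ν
      = ⨆ m : ℕ, ∫⁻ x, ENNReal.ofReal (g m x) ∂ν := by
    rw [← lintegral_iSup (fun m => (hmeas_gm m).ennreal_ofReal)]
    · apply lintegral_congr
      intro x
      by_cases hx : x ∈ r ⁻¹' E
      · simp only [Set.indicator_of_mem hx, hg_def, Function.comp]
        exact (eigen_smin (h x)).symm
      · simp [Set.indicator_of_notMem hx, hg_def]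
    · intro m k hmk x
      simp only [Function.comp]
      apply ENNReal.ofReal_le_ofReal
      by_cases hx : x ∈ r ⁻¹' E
      · simp only [hg_def, Set.indicator_of_mem hx]
        exact min_le_min le_rfl (Nat.cast_le.mpr hmk)
      · simp [hg_def, Set.indicator_of_notMem hx]
  -- right-hand side via monotone convergence (a.e. measurable version)
  have hR : (⨆ m : ℕ, ∫⁻ x, ENNReal.ofReal (transferOp r W (g m) x) ∂ν)
      = ∫⁻ x, Set.indicator E (fun y => ENNReal.ofReal (h y)) x ∂ν := by
    rw [← lintegral_iSup' (fun m => ((hK m).1.aestronglyMeasurable.aemeasurable).ennreal_ofReal)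
      (Filter.Eventually.of_forall (fun x => fun m k hmk => ENNReal.ofReal_le_ofReal
        (Tmono (g m) (g k) (fun y => by
          by_cases hy : y ∈ r ⁻¹' E
          · simp only [hg_def, Set.indicator_of_mem hy]
            exact min_le_min le_rfl (Nat.cast_le.mpr hmk)
          · simp [hg_def, Set.indicator_of_notMem hy]) x)))]
    apply lintegral_congr
    intro x
    have hrw : ∀ m : ℕ, transferOp r W (g m) x
        = E.indicator (transferOp r W (fun y => min (h y) m)) x := fun m => Tind E _ x
    simp only [hrw]
    by_cases hx : x ∈ E
    · simp only [Set.indicator_of_mem hx]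
      exact Tsup x
    · simp [Set.indicator_of_notMem hx]
  calc ∫⁻ x, Set.indicator (r ⁻¹' E) (fun y => ENNReal.ofReal (h y)) x ∂ν
      = ⨆ m : ℕ, ∫⁻ x, ENNReal.ofReal (g m x) ∂ν := hL
    _ = ⨆ m : ℕ, ∫⁻ x, ENNReal.ofReal (transferOp r W (g m) x) ∂ν := by
        exact iSup_congr fun m => ((hK m).2).symm
    _ = ∫⁻ x, Set.indicator E (fun y => ENNReal.ofReal (h y)) x ∂ν := hR
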